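/- Let μ > 0, λ ∈ ℝ with λ + 2μ > 0, κ > 0, R > 0, and let m ≥ 2 be an integer. For ε ∈ (0, 1/2) consider the model narrow region Ω_R := {(x₁, x₂) ∈ ℝ² : |x₁| < R, −ε/2 − (κ/2)|x₁|^m < x₂ < ε/2 + (κ/2)|x₁|^m}, with δ(x₁) := ε + κ|x₁|^m, ū(x₁, x₂) := (x₂ + ε/2 + (κ/2)|x₁|^m)/δ(x₁), and f(t) := (1/2)(t − 1/2)² − 1/8. Define u₁¹ := (ū, ((λ+μ)/(λ+2μ))·f(ū)·δ′)ᵀ and u₁² := (((λ+μ)/μ)·f(ū)·δ′, ū)ᵀ, and the elastic energy density W_{λ,μ}(v) := λ(∂₁v¹ + ∂₂v²)² + μ[2(∂₁v¹)² + (∂₂v¹ + ∂₁v²)² + 2(∂₂v²)²]. Then there exists a constant C > 0, depending only on λ, μ, κ, m, R and not on ε, such that for all ε ∈ (0, 1/2): |∫_{Ω_R} W_{λ,μ}(u₁¹) dx − μ·∫_{−R}^{R} 1/δ(x₁) dx₁| ≤ C and |∫_{Ω_R} W_{λ,μ}(u₁²) dx − (λ+2μ)·∫_{−R}^{R} 1/δ(x₁)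 dx₁| ≤ C. -/

import Mathlib

open MeasureTheory intervalIntegral

/-- Partial derivative in the first variable of a function of two real variables. -/
noncomputable def pd1 (g : ℝ → ℝ → ℝ) (x y : ℝ) : ℝ := deriv (fun s => g s y) x

/-- Partial derivative in the second variable of a function of two real variables. -/
noncomputable def pd2 (g : ℝ → ℝ → ℝ) (x y : ℝ) : ℝ := deriv (fun s => g x s) y

/-- Isotropic elastic energy density
`W_{λ,μ}(v) = λ(∂₁v¹+∂₂v²)² + μ[2(∂₁v¹)² + (∂₂v¹+∂₁v²)² + 2(∂₂v²)²]`
of a planar vector field `v = (v¹, v²)`. -/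
noncomputable def W2 (lam mu : ℝ) (v1 v2 : ℝ → ℝ → ℝ) (x y : ℝ) : ℝ :=
  lam * (pd1 v1 x y + pd2 v2 x y) ^ 2 +
    mu * (2 * (pd1 v1 x y) ^ 2 + (pd2 v1 x y + pd1 v2 x y) ^ 2 + 2 * (pd2 v2 x y) ^ 2)

open Filter Asymptotics

lemma isLittleO_of_abs_pow (k : ℕ) (g : ℝ → ℝ) (hg : ∀ x, ‖g x‖ ≤ |x| ^ (k + 1) * ‖x‖) :
    g =o[nhds 0] (fun x : ℝ => x) := by
  rw [Asymptotics.isLittleO_iff]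
  intro c hc
  have ht : Filter.Tendsto (fun x : ℝ => |x| ^ (k+1)) (nhds 0) (nhds 0) := by
    have : Continuous (fun x : ℝ => |x| ^ (k+1)) := continuous_abs.pow (k+1)
    simpa [zero_pow (Nat.succ_ne_zero k)] using this.tendsto 0
  filter_upwards [ht.eventually (eventually_le_nhds hc)] with x hx
  calc ‖g x‖ ≤ |x| ^ (k+1) * ‖x‖ := hg x
    _ ≤ c * ‖x‖ := mul_le_mul_of_nonneg_right hx (norm_nonneg x)

/-- derivative of `x * |x|^k` is `(k+1) * |x|^k`, everywhere. -/
lemma hasDerivAt_mul_abs_pow (k : ℕ) (s : ℝ) :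
    HasDerivAt (fun x : ℝ => x * |x| ^ k) ((k + 1) * |s| ^ k) s := by
  rcases Nat.eq_zero_or_pos k with hk | hk
  · subst hk; simpa using hasDerivAt_id' s
  obtain ⟨j, rfl⟩ : ∃ j, k = j + 1 := ⟨k - 1, by omega⟩
  rcases lt_trichotomy s 0 with hs | hs | hs
  · have h := (hasDerivAt_id s).mul ((hasDerivAt_neg s).pow (j+1))
    simp only [id_eq, Nat.add_sub_cancel, one_mul] at h
    have heq : (fun x : ℝ => x * |x| ^ (j+1)) =ᶠ[nhds s] (fun x => x * (-x)^(j+1)) := by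
      filter_upwards [eventually_lt_nhds hs] with x hx
      rw [abs_of_neg hx]
    have h' := h.congr_of_eventuallyEq heq
    refine h'.congr_deriv ?_
    simp only [Pi.pow_apply]
    rw [abs_of_neg hs]
    push_cast
    rw [pow_succ]
    ring
  · subst hs
    rw [show ((j+1:ℕ) + 1 : ℝ) * |(0:ℝ)| ^ (j+1) = 0 by
      rw [abs_zero, zero_pow (Nat.succ_ne_zero j)]; ring]
    rw [hasDerivAt_iff_isLittleO]
    simp only [sub_zero, smul_zero, zero_mul, abs_zero,
      zero_pow (Nat.succ_ne_zero j), mul_zero]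
    apply isLittleO_of_abs_pow j
    intro x
    rw [norm_mul, Real.norm_eq_abs (|x| ^ (j+1)), abs_of_nonneg (by positivity : (0:ℝ) ≤ |x| ^ (j+1))]
    rw [mul_comm]
  · have h := (hasDerivAt_id s).mul ((hasDerivAt_id s).pow (j+1))
    simp only [id_eq, Nat.add_sub_cancel, one_mul] at h
    have heq : (fun x : ℝ => x * |x| ^ (j+1)) =ᶠ[nhds s] (fun x => x * x^(j+1)) := by
      filter_upwards [eventually_gt_nhds hs] with x hx
      rw [abs_of_pos hx]
    have h' := h.congr_of_eventuallyEq heq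
    refine h'.congr_deriv ?_
    simp only [Pi.pow_apply, id_eq]
    rw [abs_of_pos hs]
    push_cast
    rw [pow_succ]
    ring

/-- derivative of `|x|^m` for `m ≥ 2` is `m * (x * |x|^(m-2))`, everywhere. -/
lemma hasDerivAt_abs_pow (m : ℕ) (hm : 2 ≤ m) (s : ℝ) :
    HasDerivAt (fun x : ℝ => |x| ^ m) ((m : ℝ) * (s * |s| ^ (m - 2))) s := by
  obtain ⟨k, rfl⟩ : ∃ k, m = k + 2 := ⟨m - 2, by omega⟩
  simp only [Nat.add_sub_cancel]
  rcases lt_trichotomy s 0 with hs | hs | hs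
  · have h := (hasDerivAt_neg s).pow (k + 2)
    have heq : (fun x : ℝ => |x| ^ (k+2)) =ᶠ[nhds s] (fun x => (-x)^(k+2)) := by
      filter_upwards [eventually_lt_nhds hs] with x hx
      rw [abs_of_neg hx]
    have h' := h.congr_of_eventuallyEq heq
    refine h'.congr_deriv ?_
    rw [abs_of_neg hs]
    push_cast
    rw [pow_succ]
    ring
  · subst hs
    rw [show ((k+2:ℕ) : ℝ) * ((0:ℝ) * |(0:ℝ)| ^ k) = 0 by ring]
    rw [hasDerivAt_iff_isLittleO]
    simp only [sub_zero, smul_zero, abs_zero, zero_pow (by omega : k + 2 ≠ 0)]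
    apply isLittleO_of_abs_pow k
    intro x
    rw [Real.norm_eq_abs (|x| ^ (k+2)), abs_of_nonneg (by positivity : (0:ℝ) ≤ |x| ^ (k+2))]
    rw [Real.norm_eq_abs, ← pow_succ]
  · have h := (hasDerivAt_id s).pow (k + 2)
    simp only [id_eq, Nat.add_sub_cancel, mul_one] at h
    have heq : (fun x : ℝ => |x| ^ (k+2)) =ᶠ[nhds s] (fun x => x^(k+2)) := by
      filter_upwards [eventually_gt_nhds hs] with x hx
      rw [abs_of_pos hx]
    have h' := h.congr_of_eventuallyEq heq
    refine h'.congr_deriv ?_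
    rw [abs_of_pos hs]
    push_cast
    rw [pow_succ]
    ring

lemma aux_main (κ R ε A K : ℝ) (m : ℕ) (hκ : 0 < κ) (hR : 0 < R) (hε : 0 < ε) (hK : 0 ≤ K)
    (G : ℝ → ℝ → ℝ) (hG : Continuous fun p : ℝ × ℝ => G p.1 p.2)
    (hbound : ∀ s t : ℝ, |s| ≤ R → |t| ≤ (ε + κ * |s| ^ m) / 2 →
      |G s t - A / (ε + κ * |s| ^ m) ^ 2| ≤ K / (ε + κ * |s| ^ m)) :
    |(∫ p in {p : ℝ × ℝ | |p.1| < R ∧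
        -ε / 2 - κ / 2 * |p.1| ^ m < p.2 ∧ p.2 < ε / 2 + κ / 2 * |p.1| ^ m}, G p.1 p.2) -
      A * ∫ x in (-R)..R, 1 / (ε + κ * |x| ^ m)| ≤ 2 * R * K := by
  set d : ℝ → ℝ := fun s => ε + κ * |s| ^ m with hd_def
  have hd : ∀ s, 0 < d s := fun s => by
    have : 0 ≤ κ * |s| ^ m := by positivity
    simp only [hd_def]; linarith
  have hcont_d : Continuous d := by
    apply continuous_const.add (continuous_const.mul (continuous_abs.pow m))
  set Ω : Set (ℝ × ℝ) := {p : ℝ × ℝ | |p.1| < R ∧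
      -ε / 2 - κ / 2 * |p.1| ^ m < p.2 ∧ p.2 < ε / 2 + κ / 2 * |p.1| ^ m} with hΩ_def
  have hopen : IsOpen Ω := by
    have h1 : IsOpen {p : ℝ × ℝ | |p.1| < R} := isOpen_lt continuous_fst.abs continuous_const
    have h2 : IsOpen {p : ℝ × ℝ | -ε / 2 - κ / 2 * |p.1| ^ m < p.2} :=
      isOpen_lt (by fun_prop) continuous_snd
    have h3 : IsOpen {p : ℝ × ℝ | p.2 < ε / 2 + κ / 2 * |p.1| ^ m} :=
      isOpen_lt continuous_snd (by fun_prop)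
    exact h1.inter (h2.inter h3)
  -- Ω is contained in a compact box
  set M : ℝ := (ε + κ * R ^ m) / 2 with hM_def
  have hsub : Ω ⊆ Set.Icc (-R) R ×ˢ Set.Icc (-M) M := by
    rintro ⟨s, t⟩ ⟨h1, h2, h3⟩
    have hsm : |s| ^ m ≤ R ^ m := pow_le_pow_left₀ (abs_nonneg s) h1.le m
    have hb : κ / 2 * |s| ^ m ≤ κ / 2 * R ^ m := by nlinarith
    constructor
    · simp only [Set.mem_Icc]; exact abs_le.mp h1.le
    · simp only [Set.mem_Icc]
      constructor
      · simp only [hM_def]; nlinarith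
      · simp only [hM_def]; nlinarith
  have hKcompact : IsCompact (Set.Icc (-R) R ×ˢ Set.Icc (-M) M) :=
    isCompact_Icc.prod isCompact_Icc
  have hIntΩ : IntegrableOn (fun p : ℝ × ℝ => G p.1 p.2) Ω := by
    exact (hG.continuousOn.integrableOn_compact hKcompact).mono_set hsub
  set F : ℝ × ℝ → ℝ := Ω.indicator (fun p => G p.1 p.2) with hF_def
  have hFint : Integrable F := (integrable_indicator_iff hopen.measurableSet).2 hIntΩ
  have hstep1 : (∫ p in Ω, G p.1 p.2) = ∫ p, F p := (MeasureTheory.integral_indicator hopen.measurableSet).symm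
  rw [MeasureTheory.Measure.volume_eq_prod] at hFint
  have fub : (∫ p, F p) = ∫ s, ∫ t, F (s, t) := by
    rw [MeasureTheory.Measure.volume_eq_prod]
    exact MeasureTheory.integral_prod F hFint
  set inner : ℝ → ℝ := fun s =>
    ∫ t in Set.Ioo (-ε / 2 - κ / 2 * |s| ^ m) (ε / 2 + κ / 2 * |s| ^ m), G s t with hinner_def
  have hinner : ∀ s, (∫ t, F (s, t)) = (Set.Ioo (-R) R).indicator inner s := by
    intro s
    by_cases hs : |s| < R
    · have hmem : s ∈ Set.Ioo (-R) R := by rw [Set.mem_Ioo]; exact abs_lt.mp hs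
      rw [Set.indicator_of_mem hmem]
      have heq : (fun t => F (s, t)) =
          (Set.Ioo (-ε / 2 - κ / 2 * |s| ^ m) (ε / 2 + κ / 2 * |s| ^ m)).indicator
            (fun t => G s t) := by
        funext t
        by_cases ht : t ∈ Set.Ioo (-ε / 2 - κ / 2 * |s| ^ m) (ε / 2 + κ / 2 * |s| ^ m)
        · rw [Set.indicator_of_mem ht]
          have : (s, t) ∈ Ω := ⟨hs, (Set.mem_Ioo.mp ht).1, (Set.mem_Ioo.mp ht).2⟩
          simp only [hF_def]
          rw [Set.indicator_of_mem this]
        · rw [Set.indicator_of_notMem ht]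
          simp only [hF_def]
          rw [Set.indicator_of_notMem]
          intro hmem'
          exact ht (Set.mem_Ioo.mpr ⟨hmem'.2.1, hmem'.2.2⟩)
      rw [heq, MeasureTheory.integral_indicator measurableSet_Ioo]
    · have hnot : s ∉ Set.Ioo (-R) R := by
        rw [Set.mem_Ioo]; intro h; exact hs (abs_lt.mpr h)
      rw [Set.indicator_of_notMem hnot]
      have heq : (fun t => F (s, t)) = fun _ => (0 : ℝ) := by
        funext t
        simp only [hF_def]
        rw [Set.indicator_of_notMem]
        intro hmem'
        exact hs hmem'.1
      rw [heq]
      simp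
  have hstep2 : (∫ s, ∫ t, F (s, t)) = ∫ s in Set.Ioo (-R) R, inner s := by
    rw [funext hinner, MeasureTheory.integral_indicator measurableSet_Ioo]
  have hmarg : IntegrableOn inner (Set.Ioo (-R) R) := by
    have h1 : Integrable (fun s => ∫ t, F (s, t)) volume := hFint.integral_prod_left
    rw [funext hinner] at h1
    exact (integrable_indicator_iff measurableSet_Ioo).1 h1
  -- rewrite the RHS capacity integral
  have hrhs : A * (∫ x in (-R)..R, 1 / d x) = ∫ s in Set.Ioo (-R) R, A * (1 / d s) := by
    rw [intervalIntegral.integral_of_le (by linarith : -R ≤ R),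
      MeasureTheory.integral_Ioc_eq_integral_Ioo, ← MeasureTheory.integral_const_mul]
  have hAd_cont : Continuous (fun s => A * (1 / d s)) := by
    apply continuous_const.mul
    exact continuous_const.div hcont_d fun s => (hd s).ne'
  have hAd_int : IntegrableOn (fun s => A * (1 / d s)) (Set.Ioo (-R) R) :=
    (hAd_cont.continuousOn.integrableOn_compact isCompact_Icc).mono_set Set.Ioo_subset_Icc_self
  -- pointwise bound on the inner integral
  have hpt : ∀ s ∈ Set.Ioo (-R) R, ‖inner s - A * (1 / d s)‖ ≤ K := by
    intro s hs
    have hsR : |s| ≤ R := (abs_lt.mpr (Set.mem_Ioo.mp hs)).le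
    have hdd := hd s
    set a : ℝ := -ε / 2 - κ / 2 * |s| ^ m with ha_def
    set b : ℝ := ε / 2 + κ / 2 * |s| ^ m with hb_def
    have hba : b - a = d s := by simp only [ha_def, hb_def, hd_def]; ring
    have hab : a ≤ b := by linarith
    have hvol : (volume (Set.Ioo a b)).toReal = d s := by
      rw [Real.volume_Ioo, ENNReal.toReal_ofReal (by linarith)]; exact hba
    have hGint : IntegrableOn (fun t => G s t) (Set.Ioo a b) := by
      have hc : Continuous (fun t : ℝ => G s t) := hG.comp (Continuous.prodMk_right s)
      exact (hc.continuousOn.integrableOn_compact isCompact_Icc).mono_set Set.Ioo_subset_Icc_self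
    have hCint : IntegrableOn (fun _ : ℝ => A / (d s) ^ 2) (Set.Ioo a b) := by
      apply integrableOn_const (by rw [Real.volume_Ioo]; exact ENNReal.ofReal_ne_top)
    have hconst : (∫ _ in Set.Ioo a b, A / (d s) ^ 2) = A * (1 / d s) := by
      rw [setIntegral_const, Measure.real, hvol, smul_eq_mul]
      field_simp
    have hdiff : inner s - A * (1 / d s) = ∫ t in Set.Ioo a b, (G s t - A / (d s) ^ 2) := by
      rw [integral_sub hGint hCint, hconst]
    rw [hdiff]
    have hbd : ∀ t ∈ Set.Ioo a b, ‖G s t - A / (d s) ^ 2‖ ≤ K / d s := by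
      intro t ht
      obtain ⟨ht1, ht2⟩ := Set.mem_Ioo.mp ht
      have htle : |t| ≤ d s / 2 := by
        rw [abs_le]
        constructor
        · simp only [hd_def]; simp only [ha_def] at ht1; linarith
        · simp only [hd_def]; simp only [hb_def] at ht2; linarith
      rw [Real.norm_eq_abs]
      exact hbound s t hsR htle
    calc ‖∫ t in Set.Ioo a b, (G s t - A / (d s) ^ 2)‖
        ≤ (K / d s) * (volume (Set.Ioo a b)).toReal := by
          apply norm_setIntegral_le_of_norm_le_const _ hbd
          rw [Real.volume_Ioo]; exact ENNReal.ofReal_lt_top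
      _ = K := by rw [hvol]; field_simp
  -- put everything together
  rw [hstep1, fub, hstep2, show (∫ x in (-R)..R, 1 / (ε + κ * |x| ^ m)) =
      ∫ x in (-R)..R, 1 / d x from rfl, hrhs, ← integral_sub hmarg hAd_int]
  calc |∫ s in Set.Ioo (-R) R, (inner s - A * (1 / d s))|
      ≤ K * (volume (Set.Ioo (-R) R)).toReal := by
        rw [← Real.norm_eq_abs]
        exact norm_setIntegral_le_of_norm_le_const (by rw [Real.volume_Ioo]; exact ENNReal.ofReal_lt_top)
          hpt
    _ ≤ 2 * R * K := by
        rw [Real.volume_Ioo, ENNReal.toReal_ofReal (by linarith)]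
        nlinarith

section derivs

variable (κ ε : ℝ) (m : ℕ)

/-- `δ(s) = ε + κ|s|^m` -/
noncomputable def Pd (s : ℝ) : ℝ := ε + κ * |s| ^ m
/-- `δ'(s)` -/
noncomputable def Dd (s : ℝ) : ℝ := κ * ((m : ℝ) * (s * |s| ^ (m - 2)))
/-- `δ''(s)` -/
noncomputable def Dd2 (s : ℝ) : ℝ := κ * ((m : ℝ) * ((((m : ℝ)) - 1) * |s| ^ (m - 2)))

variable {m}

lemma hasDerivAt_Pd (hm : 2 ≤ m) (s : ℝ) : HasDerivAt (fun x : ℝ => ε + κ * |x| ^ m) (Dd κ m s) s :=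
  ((hasDerivAt_abs_pow m hm s).const_mul κ).const_add ε

lemma hasDerivAt_Dd (hm : 2 ≤ m) (s : ℝ) : HasDerivAt (fun x : ℝ => κ * ((m : ℝ) * (x * |x| ^ (m - 2)))) (Dd2 κ m s) s := by
  have h := ((hasDerivAt_mul_abs_pow (m - 2) s).const_mul (m : ℝ)).const_mul κ
  refine h.congr_deriv ?_
  unfold Dd2
  have : ((m : ℝ) - 2) + 1 = (m : ℝ) - 1 := by ring
  rw [show ((m - 2 : ℕ) : ℝ) + 1 = (m : ℝ) - 1 by
    rw [Nat.cast_sub (by omega : 2 ≤ m)]; push_cast; ring]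

lemma hasDerivAt_ub_t (s t : ℝ) :
    HasDerivAt (fun τ : ℝ => (τ + ε / 2 + κ / 2 * |s| ^ m) / (ε + κ * |s| ^ m))
      (1 / Pd κ ε m s) t := by
  have h := (((hasDerivAt_id t).add_const (ε / 2)).add_const (κ / 2 * |s| ^ m)).div_const
    (ε + κ * |s| ^ m)
  simpa [Pd, one_div] using h

lemma hasDerivAt_ub_s (hm : 2 ≤ m) (hε : 0 < ε) (hκ : 0 < κ) (s t : ℝ) :
    HasDerivAt (fun x : ℝ => (t + ε / 2 + κ / 2 * |x| ^ m) / (ε + κ * |x| ^ m))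
      (-(t * Dd κ m s) / (Pd κ ε m s) ^ 2) s := by
  have hd : (0:ℝ) < ε + κ * |s| ^ m := by positivity
  have hnum : HasDerivAt (fun x : ℝ => t + ε / 2 + κ / 2 * |x| ^ m)
      (κ / 2 * ((m : ℝ) * (s * |s| ^ (m - 2)))) s :=
    ((hasDerivAt_abs_pow m hm s).const_mul (κ / 2)).const_add (t + ε / 2)
  have h := hnum.div (hasDerivAt_Pd κ ε hm s) hd.ne'
  refine h.congr_deriv ?_
  unfold Pd Dd
  field_simp
  ring

end derivs

section comp

variable (c κ ε : ℝ) {m : ℕ}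

/-- `∂_t (c f(ū) δ')` -/
noncomputable def Q2e (m : ℕ) (s t : ℝ) : ℝ := c * (t * Dd κ m s / (Pd κ ε m s) ^ 2)

/-- `∂_s (c f(ū) δ')` -/
noncomputable def Q1e (m : ℕ) (s t : ℝ) : ℝ :=
  c * ((t ^ 2 / (2 * (Pd κ ε m s) ^ 2) - 1 / 8) * Dd2 κ m s
    - t ^ 2 * (Dd κ m s) ^ 2 / (Pd κ ε m s) ^ 3)

lemma hasDerivAt_u2_t (hm : 2 ≤ m) (hε : 0 < ε) (hκ : 0 < κ) (s t : ℝ) :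
    HasDerivAt (fun τ : ℝ =>
      c * (1 / 2 * ((τ + ε / 2 + κ / 2 * |s| ^ m) / (ε + κ * |s| ^ m) - 1 / 2) ^ 2 - 1 / 8) *
        deriv (fun x : ℝ => ε + κ * |x| ^ m) s)
      (Q2e c κ ε m s t) t := by
  have hub := hasDerivAt_ub_t κ ε (m := m) s t
  have h := ((((hub.sub_const (1/2)).pow 2).const_mul (1/2)).sub_const (1/8)).const_mul c
    |>.mul_const (deriv (fun x : ℝ => ε + κ * |x| ^ m) s)
  refine h.congr_deriv ?_
  rw [(hasDerivAt_Pd κ ε hm s).deriv]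
  have hd : (0:ℝ) < ε + κ * |s| ^ m := by positivity
  unfold Q2e Pd Dd
  simp only [Nat.reduceSub, pow_one, Nat.cast_ofNat]
  have hd' : ε + κ * |s| ^ m ≠ 0 := hd.ne'
  field_simp
  ring

lemma hasDerivAt_u2_s (hm : 2 ≤ m) (hε : 0 < ε) (hκ : 0 < κ) (s t : ℝ) :
    HasDerivAt (fun x : ℝ =>
      c * (1 / 2 * ((t + ε / 2 + κ / 2 * |x| ^ m) / (ε + κ * |x| ^ m) - 1 / 2) ^ 2 - 1 / 8) *
        deriv (fun y : ℝ => ε + κ * |y| ^ m) x)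
      (Q1e c κ ε m s t) s := by
  have hfeq : (fun x : ℝ =>
      c * (1 / 2 * ((t + ε / 2 + κ / 2 * |x| ^ m) / (ε + κ * |x| ^ m) - 1 / 2) ^ 2 - 1 / 8) *
        deriv (fun y : ℝ => ε + κ * |y| ^ m) x)
      = (fun x : ℝ =>
      c * (1 / 2 * ((t + ε / 2 + κ / 2 * |x| ^ m) / (ε + κ * |x| ^ m) - 1 / 2) ^ 2 - 1 / 8) *
        (κ * ((m : ℝ) * (x * |x| ^ (m - 2))))) := by
    funext x
    rw [(hasDerivAt_Pd κ ε hm x).deriv]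
    rfl
  rw [hfeq]
  have hub := hasDerivAt_ub_s κ ε hm hε hκ s t
  have h := (((((hub.sub_const (1/2)).pow 2).const_mul (1/2)).sub_const (1/8)).const_mul c).mul
    (hasDerivAt_Dd κ hm s)
  refine h.congr_deriv ?_
  have hd : (0:ℝ) < ε + κ * |s| ^ m := by positivity
  unfold Q1e Pd Dd Dd2
  simp only [Pi.pow_apply, Nat.reduceSub, pow_one, Nat.cast_ofNat]
  have hd' : ε + κ * |s| ^ m ≠ 0 := hd.ne'
  field_simp
  ring

end comp

/-- explicit energy density of `u₁¹` -/
noncomputable def G1f (lam mu κ ε : ℝ) (m : ℕ) (s t : ℝ) : ℝ :=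
  lam * (-(t * Dd κ m s) / (Pd κ ε m s) ^ 2 + Q2e ((lam + mu) / (lam + 2 * mu)) κ ε m s t) ^ 2 +
    mu * (2 * (-(t * Dd κ m s) / (Pd κ ε m s) ^ 2) ^ 2 +
      (1 / Pd κ ε m s + Q1e ((lam + mu) / (lam + 2 * mu)) κ ε m s t) ^ 2 +
      2 * Q2e ((lam + mu) / (lam + 2 * mu)) κ ε m s t ^ 2)

/-- explicit energy density of `u₁²` -/
noncomputable def G2f (lam mu κ ε : ℝ) (m : ℕ) (s t : ℝ) : ℝ :=
  lam * (Q1e ((lam + mu) / mu) κ ε m s t + 1 / Pd κ ε m s) ^ 2 +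
    mu * (2 * Q1e ((lam + mu) / mu) κ ε m s t ^ 2 +
      (Q2e ((lam + mu) / mu) κ ε m s t + -(t * Dd κ m s) / (Pd κ ε m s) ^ 2) ^ 2 +
      2 * (1 / Pd κ ε m s) ^ 2)

lemma W2_eq_G1 (lam mu κ ε : ℝ) {m : ℕ} (hm : 2 ≤ m) (hε : 0 < ε) (hκ : 0 < κ) (s t : ℝ) :
    W2 lam mu (fun s t => (t + ε / 2 + κ / 2 * |s| ^ m) / (ε + κ * |s| ^ m))
      (fun s t => (lam + mu) / (lam + 2 * mu) *
        (1 / 2 * ((t + ε / 2 + κ / 2 * |s| ^ m) / (ε + κ * |s| ^ m) - 1 / 2) ^ 2 - 1 / 8) *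
        deriv (fun s => ε + κ * |s| ^ m) s) s t = G1f lam mu κ ε m s t := by
  simp only [W2, pd1, pd2]
  rw [(hasDerivAt_ub_s κ ε hm hε hκ s t).deriv, (hasDerivAt_ub_t κ ε (m := m) s t).deriv,
    (hasDerivAt_u2_s ((lam + mu) / (lam + 2 * mu)) κ ε hm hε hκ s t).deriv,
    (hasDerivAt_u2_t ((lam + mu) / (lam + 2 * mu)) κ ε hm hε hκ s t).deriv]
  unfold G1f
  ring

lemma W2_eq_G2 (lam mu κ ε : ℝ) {m : ℕ} (hm : 2 ≤ m) (hε : 0 < ε) (hκ : 0 < κ) (s t : ℝ) :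
    W2 lam mu
      (fun s t => (lam + mu) / mu *
        (1 / 2 * ((t + ε / 2 + κ / 2 * |s| ^ m) / (ε + κ * |s| ^ m) - 1 / 2) ^ 2 - 1 / 8) *
        deriv (fun s => ε + κ * |s| ^ m) s)
      (fun s t => (t + ε / 2 + κ / 2 * |s| ^ m) / (ε + κ * |s| ^ m)) s t
      = G2f lam mu κ ε m s t := by
  simp only [W2, pd1, pd2]
  rw [(hasDerivAt_ub_s κ ε hm hε hκ s t).deriv, (hasDerivAt_ub_t κ ε (m := m) s t).deriv,
    (hasDerivAt_u2_s ((lam + mu) / mu) κ ε hm hε hκ s t).deriv,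
    (hasDerivAt_u2_t ((lam + mu) / mu) κ ε hm hε hκ s t).deriv]
  unfold G2f
  ring

lemma continuous_G1f (lam mu κ ε : ℝ) (m : ℕ) (hε : 0 < ε) (hκ : 0 < κ) :
    Continuous fun p : ℝ × ℝ => G1f lam mu κ ε m p.1 p.2 := by
  unfold G1f Q1e Q2e Pd Dd Dd2
  fun_prop (disch := intros; positivity)

lemma continuous_G2f (lam mu κ ε : ℝ) (m : ℕ) (hε : 0 < ε) (hκ : 0 < κ) :
    Continuous fun p : ℝ × ℝ => G2f lam mu κ ε m p.1 p.2 := by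
  unfold G2f Q1e Q2e Pd Dd Dd2
  fun_prop (disch := intros; positivity)

lemma alg1 (lam mu c t d D q : ℝ) (hd : d ≠ 0) :
    (lam * (-(t*D)/d^2 + c*(t*D/d^2))^2
      + mu*(2*(-(t*D)/d^2)^2 + (1/d + q)^2 + 2*(c*(t*D/d^2))^2) - mu/d^2) * d
    = (lam*(c-1)^2 + 2*mu + 2*mu*c^2) * (t^2*D^2/d^3) + mu*(2*q + q^2*d) := by
  field_simp
  ring

lemma alg2 (lam mu c t d D q : ℝ) (hd : d ≠ 0) :
    (lam * (q + 1/d)^2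
      + mu*(2*q^2 + (c*(t*D/d^2) + -(t*D)/d^2)^2 + 2*(1/d)^2) - (lam+2*mu)/d^2) * d
    = mu*(c-1)^2 * (t^2*D^2/d^3) + 2*lam*q + (lam+2*mu)*q^2*d := by
  field_simp
  ring

section bounds

/-- uniform bound for `δ'^2/δ` and `|δ''|` -/
noncomputable def DDc (κ R : ℝ) (m : ℕ) : ℝ := κ * (m:ℝ)^2 * R^(m-2)
/-- uniform bound for `δ` -/
noncomputable def dmaxc (κ R : ℝ) (m : ℕ) : ℝ := 1/2 + κ * R^m

variable {κ R ε : ℝ} {m : ℕ} {s t : ℝ}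

lemma Pd_pos (hε : 0 < ε) (hκ : 0 < κ) (s : ℝ) : 0 < Pd κ ε m s := by unfold Pd; positivity

lemma Pd_le (hκ : 0 < κ) (hε2 : ε < 1/2) (hs : |s| ≤ R) : Pd κ ε m s ≤ dmaxc κ R m := by
  unfold Pd dmaxc
  have h := pow_le_pow_left₀ (abs_nonneg s) hs m
  nlinarith

lemma Dd_sq_le (hm : 2 ≤ m) (hκ : 0 < κ) (hR : 0 < R) (hε : 0 < ε) (hs : |s| ≤ R) :
    (Dd κ m s)^2 ≤ DDc κ R m * Pd κ ε m s := by
  have h1 : (s * |s|^(m-2))^2 = |s|^(m-2) * |s|^m := by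
    have hs2 : s^2 = |s|^2 := (sq_abs s).symm
    rw [mul_pow, hs2, ← pow_mul, ← pow_add, ← pow_add]
    congr 1
    omega
  have h3 : |s|^(m-2) ≤ R^(m-2) := pow_le_pow_left₀ (abs_nonneg s) hs (m-2)
  have h4 : κ * |s|^m ≤ ε + κ * |s|^m := by linarith
  have h2 : |s|^(m-2) * (κ*|s|^m) ≤ R^(m-2) * (ε + κ*|s|^m) := by
    apply mul_le_mul h3 h4 (by positivity) (by positivity)
  calc (Dd κ m s)^2 = κ*(m:ℝ)^2*(|s|^(m-2)*(κ*|s|^m)) := by unfold Dd; rw [mul_pow, mul_pow, h1]; ring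
    _ ≤ κ*(m:ℝ)^2*(R^(m-2)*(ε + κ*|s|^m)) := by
        apply mul_le_mul_of_nonneg_left h2 (by positivity)
    _ = DDc κ R m * Pd κ ε m s := by unfold DDc Pd; ring

lemma Dd2_abs_le (hm : 2 ≤ m) (hκ : 0 < κ) (hR : 0 < R) (hs : |s| ≤ R) :
    |Dd2 κ m s| ≤ DDc κ R m := by
  have hm1 : (1:ℝ) ≤ (m:ℝ) := by exact_mod_cast Nat.one_le_iff_ne_zero.mpr (by omega)
  have h3 : |s|^(m-2) ≤ R^(m-2) := pow_le_pow_left₀ (abs_nonneg s) hs (m-2)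
  have h0 : (0:ℝ) ≤ |s|^(m-2) := by positivity
  have h5 : ((m:ℝ)-1)*|s|^(m-2) ≤ (m:ℝ)*R^(m-2) := by
    apply mul_le_mul (by linarith) h3 h0 (by linarith)
  unfold Dd2 DDc
  rw [abs_of_nonneg (mul_nonneg hκ.le (mul_nonneg (by linarith) (mul_nonneg (by linarith) h0)))]
  calc κ * ((m:ℝ) * (((m:ℝ) - 1) * |s| ^ (m - 2))) ≤ κ * ((m:ℝ) * ((m:ℝ)*R^(m-2))) := by
        apply mul_le_mul_of_nonneg_left _ hκ.le
        apply mul_le_mul_of_nonneg_left h5 (by linarith)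
    _ = κ * (m:ℝ)^2 * R^(m-2) := by ring

lemma t_sq_le (hε : 0 < ε) (hκ : 0 < κ) (ht : |t| ≤ Pd κ ε m s / 2) :
    t^2 ≤ (Pd κ ε m s)^2/4 := by
  nlinarith [sq_abs t, abs_nonneg t]

lemma X_le (hm : 2 ≤ m) (hκ : 0 < κ) (hR : 0 < R) (hε : 0 < ε) (hs : |s| ≤ R)
    (ht : |t| ≤ Pd κ ε m s / 2) :
    t^2*(Dd κ m s)^2/(Pd κ ε m s)^3 ≤ DDc κ R m / 4 := by
  have hd := Pd_pos hε hκ (m := m) s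
  have h1 := t_sq_le hε hκ ht
  have h2 := Dd_sq_le hm hκ hR hε hs
  rw [div_le_iff₀ (by positivity)]
  nlinarith [sq_nonneg (Dd κ m s), sq_nonneg t]

lemma Q1e_abs_le (c : ℝ) (hm : 2 ≤ m) (hκ : 0 < κ) (hR : 0 < R) (hε : 0 < ε)
    (hs : |s| ≤ R) (ht : |t| ≤ Pd κ ε m s / 2) :
    |Q1e c κ ε m s t| ≤ |c| * DDc κ R m := by
  have hd := Pd_pos hε hκ (m := m) s
  have hDDc : (0:ℝ) ≤ DDc κ R m := by unfold DDc; positivity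
  have hX0 : (0:ℝ) ≤ t^2*(Dd κ m s)^2/(Pd κ ε m s)^3 := by positivity
  have hX := X_le hm hκ hR hε hs ht
  have h8 : |t^2/(2*(Pd κ ε m s)^2) - 1/8| ≤ 1/8 := by
    have h1 := t_sq_le hε hκ ht
    have h2 : t^2/(2*(Pd κ ε m s)^2) ≤ 1/8 := by
      rw [div_le_iff₀ (by positivity)]
      nlinarith
    have h3 : (0:ℝ) ≤ t^2/(2*(Pd κ ε m s)^2) := by positivity
    rw [abs_le]
    constructor <;> linarith
  have hD2 := Dd2_abs_le hm hκ hR hs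
  unfold Q1e
  rw [abs_mul]
  apply mul_le_mul_of_nonneg_left _ (abs_nonneg c)
  calc |(t^2/(2*(Pd κ ε m s)^2) - 1/8) * Dd2 κ m s - t^2*(Dd κ m s)^2/(Pd κ ε m s)^3|
      ≤ |(t^2/(2*(Pd κ ε m s)^2) - 1/8) * Dd2 κ m s| + |t^2*(Dd κ m s)^2/(Pd κ ε m s)^3| := by
        rw [sub_eq_add_neg]
        exact (abs_add_le _ _).trans (by rw [abs_neg])
    _ ≤ (1/8) * DDc κ R m + DDc κ R m / 4 := by
        rw [abs_mul, abs_of_nonneg hX0]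
        have h9 := mul_le_mul h8 hD2 (abs_nonneg _) (by norm_num : (0:ℝ) ≤ 1/8)
        linarith [hX]
    _ ≤ DDc κ R m := by
        have hDDc : (0:ℝ) ≤ DDc κ R m := by unfold DDc; positivity
        linarith

end bounds

noncomputable def K1c (lam mu κ R : ℝ) (m : ℕ) : ℝ :=
  |lam*((lam+mu)/(lam+2*mu)-1)^2 + 2*mu + 2*mu*((lam+mu)/(lam+2*mu))^2| * (DDc κ R m / 4)
  + mu*(2*(|(lam+mu)/(lam+2*mu)| *DDc κ R m) + (|(lam+mu)/(lam+2*mu)| *DDc κ R m)^2 * dmaxc κ R m)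

noncomputable def K2c (lam mu κ R : ℝ) (m : ℕ) : ℝ :=
  mu*((lam+mu)/mu - 1)^2 * (DDc κ R m / 4)
  + 2*|lam| *(|(lam+mu)/mu| *DDc κ R m) + |lam+2*mu| *(|(lam+mu)/mu| *DDc κ R m)^2 * dmaxc κ R m

section mainbounds

variable {lam mu κ R ε : ℝ} {m : ℕ} {s t : ℝ}

lemma basic_bounds (hmu : 0 < mu) (hm : 2 ≤ m) (hκ : 0 < κ) (hR : 0 < R) (hε : 0 < ε)
    (hε2 : ε < 1/2) (hs : |s| ≤ R) (ht : |t| ≤ Pd κ ε m s / 2) (c : ℝ) :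
    (0 ≤ t^2*(Dd κ m s)^2/(Pd κ ε m s)^3 ∧ t^2*(Dd κ m s)^2/(Pd κ ε m s)^3 ≤ DDc κ R m / 4) ∧
    ((Q1e c κ ε m s t)^2 ≤ (|c| * DDc κ R m)^2 ∧ |Q1e c κ ε m s t| ≤ |c| * DDc κ R m) ∧
    (Pd κ ε m s ≤ dmaxc κ R m ∧ 0 ≤ dmaxc κ R m ∧ 0 ≤ DDc κ R m) := by
  have hd := Pd_pos hε hκ (m := m) s
  have hq := Q1e_abs_le c hm hκ hR hε hs ht
  refine ⟨⟨by positivity, X_le hm hκ hR hε hs ht⟩, ⟨?_, hq⟩,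
    Pd_le hκ hε2 hs, by unfold dmaxc; positivity, by unfold DDc; positivity⟩
  obtain ⟨h1, h2⟩ := abs_le.mp hq
  exact sq_le_sq' h1 h2

lemma G1f_bound (hmu : 0 < mu) (hm : 2 ≤ m) (hκ : 0 < κ) (hR : 0 < R) (hε : 0 < ε)
    (hε2 : ε < 1/2) (hs : |s| ≤ R) (ht : |t| ≤ Pd κ ε m s / 2) :
    |G1f lam mu κ ε m s t - mu/(Pd κ ε m s)^2| ≤ K1c lam mu κ R m / Pd κ ε m s := by
  set c := (lam+mu)/(lam+2*mu) with hc_def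
  have hd := Pd_pos hε hκ (m := m) s
  obtain ⟨⟨hX0, hX⟩, ⟨hq2, hq⟩, hdmax, hdmax0, hDDc⟩ := basic_bounds hmu hm hκ hR hε hε2 hs ht c
  have hG : (G1f lam mu κ ε m s t - mu/(Pd κ ε m s)^2) * Pd κ ε m s
      = (lam*(c-1)^2 + 2*mu + 2*mu*c^2) * (t^2*(Dd κ m s)^2/(Pd κ ε m s)^3)
        + mu*(2*Q1e c κ ε m s t + (Q1e c κ ε m s t)^2*Pd κ ε m s) := by
    have := alg1 lam mu c t (Pd κ ε m s) (Dd κ m s) (Q1e c κ ε m s t) hd.ne'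
    rw [← this]
    unfold G1f Q2e
    rw [← hc_def]
  rw [le_div_iff₀ hd, show |G1f lam mu κ ε m s t - mu/(Pd κ ε m s)^2| * Pd κ ε m s
    = |(G1f lam mu κ ε m s t - mu/(Pd κ ε m s)^2) * Pd κ ε m s| by
      rw [abs_mul, abs_of_pos hd], hG]
  set X := t^2*(Dd κ m s)^2/(Pd κ ε m s)^3
  set q := Q1e c κ ε m s t
  set A0 := lam*(c-1)^2 + 2*mu + 2*mu*c^2 with hA0_def
  calc |A0 * X + mu*(2*q + q^2*Pd κ ε m s)|
      ≤ |A0 * X| + |mu*(2*q + q^2*Pd κ ε m s)| := abs_add_le _ _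
    _ = |A0| *X + mu*|2*q + q^2*Pd κ ε m s| := by
        rw [abs_mul, abs_of_nonneg hX0, abs_mul, abs_of_pos hmu]
    _ ≤ |A0| *(DDc κ R m/4) + mu*(2*(|c| *DDc κ R m) + (|c| *DDc κ R m)^2*dmaxc κ R m) := by
        have e1 : |A0| *X ≤ |A0| *(DDc κ R m/4) := mul_le_mul_of_nonneg_left hX (abs_nonneg _)
        have e2 : |2*q + q^2*Pd κ ε m s| ≤ 2*|q| + q^2*Pd κ ε m s := by
          refine (abs_add_le _ _).trans ?_
          rw [abs_mul, abs_mul, abs_of_nonneg (sq_nonneg q), abs_of_pos hd]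
          norm_num
        have e3 : q^2*Pd κ ε m s ≤ (|c| *DDc κ R m)^2*dmaxc κ R m :=
          mul_le_mul hq2 hdmax hd.le (sq_nonneg _)
        have e4 : mu*|2*q + q^2*Pd κ ε m s| ≤ mu*(2*(|c| *DDc κ R m) + (|c| *DDc κ R m)^2*dmaxc κ R m) := by
          apply mul_le_mul_of_nonneg_left _ hmu.le
          linarith
        linarith
    _ = K1c lam mu κ R m := by rw [K1c, hA0_def, hc_def]

lemma G2f_bound (hmu : 0 < mu) (hm : 2 ≤ m) (hκ : 0 < κ) (hR : 0 < R) (hε : 0 < ε)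
    (hε2 : ε < 1/2) (hs : |s| ≤ R) (ht : |t| ≤ Pd κ ε m s / 2) :
    |G2f lam mu κ ε m s t - (lam+2*mu)/(Pd κ ε m s)^2| ≤ K2c lam mu κ R m / Pd κ ε m s := by
  set c := (lam+mu)/mu with hc_def
  have hd := Pd_pos hε hκ (m := m) s
  obtain ⟨⟨hX0, hX⟩, ⟨hq2, hq⟩, hdmax, hdmax0, hDDc⟩ := basic_bounds hmu hm hκ hR hε hε2 hs ht c
  have hG : (G2f lam mu κ ε m s t - (lam+2*mu)/(Pd κ ε m s)^2) * Pd κ ε m s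
      = mu*(c-1)^2 * (t^2*(Dd κ m s)^2/(Pd κ ε m s)^3)
        + 2*lam*Q1e c κ ε m s t + (lam+2*mu)*(Q1e c κ ε m s t)^2*Pd κ ε m s := by
    have := alg2 lam mu c t (Pd κ ε m s) (Dd κ m s) (Q1e c κ ε m s t) hd.ne'
    rw [← this]
    unfold G2f Q2e
    rw [← hc_def]
  rw [le_div_iff₀ hd, show |G2f lam mu κ ε m s t - (lam+2*mu)/(Pd κ ε m s)^2| * Pd κ ε m s
    = |(G2f lam mu κ ε m s t - (lam+2*mu)/(Pd κ ε m s)^2) * Pd κ ε m s| by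
      rw [abs_mul, abs_of_pos hd], hG]
  set X := t^2*(Dd κ m s)^2/(Pd κ ε m s)^3
  set q := Q1e c κ ε m s t
  calc |mu*(c-1)^2 * X + 2*lam*q + (lam+2*mu)*q^2*Pd κ ε m s|
      ≤ |mu*(c-1)^2 * X| + |2*lam*q| + |(lam+2*mu)*q^2*Pd κ ε m s| := by
        refine (abs_add_le _ _).trans ?_
        have := abs_add_le (mu*(c-1)^2 * X) (2*lam*q)
        linarith
    _ ≤ mu*(c-1)^2*(DDc κ R m/4) + 2*|lam| *(|c| *DDc κ R m)
        + |lam+2*mu| *(|c| *DDc κ R m)^2*dmaxc κ R m := by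
        have e1 : |mu*(c-1)^2 * X| ≤ mu*(c-1)^2*(DDc κ R m/4) := by
          rw [abs_mul, abs_of_nonneg (by positivity : (0:ℝ) ≤ mu*(c-1)^2), abs_of_nonneg hX0]
          apply mul_le_mul_of_nonneg_left hX (by positivity)
        have e2 : |2*lam*q| ≤ 2*|lam| *(|c| *DDc κ R m) := by
          rw [abs_mul, abs_mul]
          norm_num
          apply mul_le_mul_of_nonneg_left hq (by positivity)
        have e3 : |(lam+2*mu)*q^2*Pd κ ε m s| ≤ |lam+2*mu| *(|c| *DDc κ R m)^2*dmaxc κ R m := by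
          rw [abs_mul, abs_mul, abs_of_nonneg (sq_nonneg q), abs_of_pos hd, mul_assoc, mul_assoc]
          apply mul_le_mul_of_nonneg_left _ (abs_nonneg _)
          exact mul_le_mul hq2 hdmax hd.le (sq_nonneg _)
        linarith
    _ = K2c lam mu κ R m := by rw [K2c, hc_def]

end mainbounds

lemma K1c_nonneg {lam mu κ R : ℝ} (m : ℕ) (hmu : 0 < mu) (hκ : 0 < κ) (hR : 0 < R) :
    0 ≤ K1c lam mu κ R m := by
  unfold K1c DDc dmaxc
  positivity

lemma K2c_nonneg {lam mu κ R : ℝ} (m : ℕ) (hmu : 0 < mu) (hκ : 0 < κ) (hR : 0 < R) :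
    0 ≤ K2c lam mu κ R m := by
  unfold K2c DDc dmaxc
  positivity

/-- In the model narrow region, the elastic energies of the improved auxiliary functions
`u₁¹ = (ū, c_λ f(ū)δ′)ᵀ` and `u₁² = (c_μ f(ū)δ′, ū)ᵀ` equal `μ`, resp. `λ+2μ`, times the
capacity integral `∫_{−R}^{R} dx₁/δ(x₁)`, up to an error bounded uniformly in `ε`. -/
theorem stmt17 (lam mu κ R : ℝ) (m : ℕ) (hmu : 0 < mu) (hlm : 0 < lam + 2 * mu)
    (hκ : 0 < κ) (hR : 0 < R) (hm : 2 ≤ m) :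
    ∃ C > 0, ∀ ε : ℝ, 0 < ε → ε < 1 / 2 →
      (let δ : ℝ → ℝ := fun s => ε + κ * |s| ^ m
       let ub : ℝ → ℝ → ℝ := fun s t => (t + ε / 2 + κ / 2 * |s| ^ m) / δ s
       let f : ℝ → ℝ := fun t => (1 / 2) * (t - 1 / 2) ^ 2 - 1 / 8
       let Ω : Set (ℝ × ℝ) := {p : ℝ × ℝ | |p.1| < R ∧
         -ε / 2 - κ / 2 * |p.1| ^ m < p.2 ∧ p.2 < ε / 2 + κ / 2 * |p.1| ^ m}
       let u11 : ℝ → ℝ → ℝ := ub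
       let u12 : ℝ → ℝ → ℝ :=
         fun s t => ((lam + mu) / (lam + 2 * mu)) * f (ub s t) * deriv δ s
       let u21 : ℝ → ℝ → ℝ := fun s t => ((lam + mu) / mu) * f (ub s t) * deriv δ s
       let u22 : ℝ → ℝ → ℝ := ub
       |(∫ p in Ω, W2 lam mu u11 u12 p.1 p.2) -
           mu * ∫ x₁ in (-R)..R, 1 / δ x₁| ≤ C ∧
       |(∫ p in Ω, W2 lam mu u21 u22 p.1 p.2) -
           (lam + 2 * mu) * ∫ x₁ in (-R)..R, 1 / δ x₁| ≤ C) := by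
  have hK1 := K1c_nonneg (lam := lam) (mu := mu) (κ := κ) (R := R) m hmu hκ hR
  have hK2 := K2c_nonneg (lam := lam) (mu := mu) (κ := κ) (R := R) m hmu hκ hR
  have hRK1 : 0 ≤ 2 * R * K1c lam mu κ R m := by positivity
  have hRK2 : 0 ≤ 2 * R * K2c lam mu κ R m := by positivity
  refine ⟨2 * R * K1c lam mu κ R m + 2 * R * K2c lam mu κ R m + 1, by linarith, ?_⟩
  intro ε hε hε2
  dsimp only
  constructor
  · have hb1 : ∀ s t : ℝ, |s| ≤ R → |t| ≤ (ε + κ * |s| ^ m) / 2 →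
        |G1f lam mu κ ε m s t - mu / (ε + κ * |s| ^ m) ^ 2| ≤
          K1c lam mu κ R m / (ε + κ * |s| ^ m) :=
      fun s t hs ht => G1f_bound hmu hm hκ hR hε hε2 hs ht
    have key := aux_main κ R ε mu (K1c lam mu κ R m) m hκ hR hε hK1
      (G1f lam mu κ ε m) (continuous_G1f lam mu κ ε m hε hκ) hb1
    rw [funext fun p : ℝ × ℝ => W2_eq_G1 lam mu κ ε hm hε hκ p.1 p.2]
    linarith
  · have hb2 : ∀ s t : ℝ, |s| ≤ R → |t| ≤ (ε + κ * |s| ^ m) / 2 →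
        |G2f lam mu κ ε m s t - (lam + 2 * mu) / (ε + κ * |s| ^ m) ^ 2| ≤
          K2c lam mu κ R m / (ε + κ * |s| ^ m) :=
      fun s t hs ht => G2f_bound hmu hm hκ hR hε hε2 hs ht
    have key := aux_main κ R ε (lam + 2 * mu) (K2c lam mu κ R m) m hκ hR hε hK2
      (G2f lam mu κ ε m) (continuous_G2f lam mu κ ε m hε hκ) hb2
    rw [funext fun p : ℝ × ℝ => W2_eq_G2 lam mu κ ε hm hε hκ p.1 p.2]
    linarith
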